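/- Let D₁, …, D_d be derivations of a commutative algebra A (e.g. C^∞(M)), and set L = −(D₁² + … + D_d²). Then for any natural number k and any f, g ∈ A, the element L^k(f g) can be written as a sum of at most (4d)^k terms, each of the form ±(D_{i₁}⋯D_{i_m} f)(D_{j₁}⋯D_{j_{2k−m}} g) with 0 ≤ m ≤ 2k and indices in {1,…,d}. -/
import Mathlib


/-- Apply a word of derivations `D_{i₁} ⋯ D_{i_m}` to an element. -/
def applyWord {A : Type*} [CommRing A] {d : ℕ}
    (D : Fin d → Module.End ℤ A) (w : List (Fin d)) (f : A) : A :=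
  w.foldr (fun i x => D i x) f

/-- Leibniz-type expansion for powers of `L = −∑ⱼ Dⱼ²`: for derivations
`D₁, …, D_d` of a commutative algebra `A`, the element `L^k(fg)` is a sum of at
most `(4d)^k` signed terms of the form `±(D_{i₁}⋯D_{i_m} f)(D_{j₁}⋯D_{j_{2k−m}} g)`
with `0 ≤ m ≤ 2k`. -/
theorem stmt9 {A : Type*} [CommRing A] {d : ℕ}
    (D : Fin d → Module.End ℤ A)
    (hder : ∀ j : Fin d, ∀ f g : A, D j (f * g) = f * D j g + g * D j f)
    (L : A → A) (hL : ∀ f : A, L f = -(∑ j : Fin d, D j (D j f)))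
    (k : ℕ) (f g : A) :
    ∃ S : Multiset (List (Fin d) × List (Fin d) × Bool),
      Multiset.card S ≤ (4 * d) ^ k ∧
      (∀ p ∈ S, p.1.length + p.2.1.length = 2 * k) ∧
      L^[k] (f * g) =
        (S.map (fun p =>
          (if p.2.2 then (1 : ℤ) else -1) •
            (applyWord D p.1 f * applyWord D p.2.1 g))).sum := by
  classical
  set Lm : Module.End ℤ A := -(∑ j : Fin d, (D j) ∘ₗ (D j)) with hLm
  have hLL : ∀ x, L x = Lm x := by
    intro x
    simp [hL, hLm, LinearMap.sum_apply]
  have key : ∀ (j : Fin d) (u v : A),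
      D j (D j (u * v)) =
        u * D j (D j v) + D j u * D j v + (D j u * D j v + D j (D j u) * v) := by
    intro j u v
    rw [hder, map_add, hder, hder]; ring
  set t : (List (Fin d) × List (Fin d) × Bool) → A := fun p =>
    (if p.2.2 then (1 : ℤ) else -1) •
      (applyWord D p.1 f * applyWord D p.2.1 g) with ht
  induction k with
  | zero =>
      refine ⟨{([], [], true)}, by simp, by simp, ?_⟩
      simp [applyWord, ht]
  | succ k ih =>
      obtain ⟨S, hcard, hlen, hsum⟩ := ih
      set inner : (List (Fin d) × List (Fin d) × Bool) →
          Multiset (List (Fin d) × List (Fin d) × Bool) :=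
        fun p => (Finset.univ.val : Multiset (Fin d)).bind (fun j =>
          {(p.1, j::j::p.2.1, !p.2.2), (j::p.1, j::p.2.1, !p.2.2),
           (j::p.1, j::p.2.1, !p.2.2), (j::j::p.1, p.2.1, !p.2.2)}) with hinner
      have hic : ∀ p, Multiset.card (inner p) = 4 * d := by
        intro p
        simp [hinner, Multiset.card_bind, Multiset.map_map, Multiset.map_const',
          Multiset.sum_replicate]
        ring
      refine ⟨S.bind inner, ?_, ?_, ?_⟩
      · rw [Multiset.card_bind]
        calc (S.map (fun p => Multiset.card (inner p))).sum
            = (S.map (fun _ => 4 * d)).sum := by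
              congr 1; exact Multiset.map_congr rfl fun p _ => hic p
          _ = Multiset.card S * (4 * d) := by
              simp [Multiset.map_const', Multiset.sum_replicate, smul_eq_mul]
          _ ≤ (4 * d) ^ k * (4 * d) := Nat.mul_le_mul_right _ hcard
          _ = (4 * d) ^ (k + 1) := (pow_succ _ _).symm
      · intro p hp
        rw [Multiset.mem_bind] at hp
        obtain ⟨q, hq, hpq⟩ := hp
        have := hlen q hq
        rw [hinner] at hpq
        rw [Multiset.mem_bind] at hpq
        obtain ⟨j, -, h⟩ := hpq
        simp only [Multiset.insert_eq_cons, Multiset.mem_cons,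
          Multiset.mem_singleton] at h
        rcases h with rfl | rfl | rfl | rfl <;> simp <;> omega
      · rw [Function.iterate_succ_apply', hsum, hLL, map_multiset_sum,
          Multiset.map_map, Multiset.map_bind, Multiset.sum_bind]
        congr 1
        refine Multiset.map_congr rfl fun p _ => ?_
        obtain ⟨w1, w2, b⟩ := p
        have hu : ∀ (j : Fin d) (w : List (Fin d)) (x : A),
            applyWord D (j :: w) x = D j (applyWord D w x) := fun _ _ _ => rfl
        have hLmx : ∀ x : A, Lm x = -(∑ j : Fin d, D j (D j x)) := by
          intro x; simp [hLm, LinearMap.sum_apply]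
        simp only [Function.comp, ht, map_zsmul, hLmx]
        rw [Finset.sum_eq_multiset_sum]
        simp only [hinner, Multiset.map_bind, Multiset.sum_bind, Multiset.map_map]
        rw [← Multiset.sum_map_neg', Multiset.map_map]
        refine congrArg Multiset.sum (Multiset.map_congr rfl fun j _ => ?_)
        cases b <;>
          simp [ht, hu, key j (applyWord D w1 f) (applyWord D w2 g)] <;> ring
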